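/- Let A ∈ ℂ^{n×N}, S ⊆ {1,…,N}, and define δ*(S) = max_{ℓ∉S} ‖A_{S∪{ℓ}}* A_{S∪{ℓ}} − I‖₂. If δ*(S) ≤ δ < 1/2, then ‖A_S† a_ℓ‖₂ ≤ δ/(1−δ) < 1 for all ℓ ∉ S. -/

import Mathlib

open Matrix
open Matrix
open scoped BigOperators Matrix.Norms.L2Operator

lemma aux_sumsq_comp_le {α β : Type*} [Fintype α] [Fintype β] [DecidableEq β] {f : α → β}
    (hf : Function.Injective f) (w : β → ℂ) :
    ∑ a, ‖w (f a)‖ ^ 2 ≤ ∑ b, ‖w b‖ ^ 2 := by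
  have h1 : ∑ a, ‖w (f a)‖ ^ 2 = ∑ b ∈ Finset.univ.image f, ‖w b‖ ^ 2 :=
    (Finset.sum_image (g := f) (f := fun b => ‖w b‖ ^ 2) (fun a _ b _ h => hf h)).symm
  rw [h1]
  exact Finset.sum_le_sum_of_subset_of_nonneg (Finset.subset_univ _)
    (fun _ _ _ => by positivity)

noncomputable def esAux {γ : Type*} [Fintype γ] (v : γ → ℂ) : EuclideanSpace ℂ γ :=
  (WithLp.equiv 2 _).symm v

lemma aux_norm_comp_le {α β : Type*} [Fintype α] [Fintype β] [DecidableEq β] {f : α → β}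
    (hf : Function.Injective f) (w : β → ℂ) :
    ‖esAux (fun a => w (f a))‖ ≤ ‖esAux w‖ := by
  rw [esAux, esAux, EuclideanSpace.norm_eq, EuclideanSpace.norm_eq]
  apply Real.sqrt_le_sqrt
  simpa using aux_sumsq_comp_le hf w

lemma aux_mulVec_le {ι : Type*} [Fintype ι] [DecidableEq ι] (M : Matrix ι ι ℂ) (v : ι → ℂ) :
    ‖esAux (M *ᵥ v)‖ ≤ ‖M‖ * ‖esAux v‖ := by
  exact M.l2_opNorm_mulVec ((EuclideanSpace.equiv ι ℂ).symm v)

/-- The column submatrix `A_S`. -/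
noncomputable def colSub {n N : ℕ} (A : Matrix (Fin n) (Fin N) ℂ) (S : Finset (Fin N)) :
    Matrix (Fin n) {j // j ∈ S} ℂ :=
  Matrix.of fun i j => A i j.1

/-- The pseudo-inverse `A_S† = (A_S* A_S)⁻¹ A_S*`. -/
noncomputable def pinv {n N : ℕ} (A : Matrix (Fin n) (Fin N) ℂ) (S : Finset (Fin N)) :
    Matrix {j // j ∈ S} (Fin n) ℂ :=
  ((colSub A S)ᴴ * colSub A S)⁻¹ * (colSub A S)ᴴ

/-- If `δ*(S) = max_{ℓ∉S} ‖A_{S∪{ℓ}}* A_{S∪{ℓ}} - I‖₂ ≤ δ < 1/2`, then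
`‖A_S† a_ℓ‖₂ ≤ δ/(1-δ) < 1` for all `ℓ ∉ S`. -/
theorem stmt_12 (n N : ℕ) (A : Matrix (Fin n) (Fin N) ℂ) (S : Finset (Fin N))
    (δ : ℝ) (hδ : δ < 1 / 2)
    (hstar : ∀ ℓ ∉ S,
      ‖(colSub A (insert ℓ S))ᴴ * colSub A (insert ℓ S) - 1‖ ≤ δ) :
    δ / (1 - δ) < 1 ∧
      ∀ ℓ ∉ S,
        Real.sqrt (∑ j : {j // j ∈ S}, ‖(pinv A S).mulVec (fun i => A i ℓ) j‖ ^ 2) ≤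
          δ / (1 - δ) := by
  have h1δ : (0:ℝ) < 1 - δ := by linarith
  constructor
  · rw [div_lt_one h1δ]; linarith
  intro ℓ hℓ
  set T := insert ℓ S with hT
  set Big : Matrix {j // j ∈ T} {j // j ∈ T} ℂ := (colSub A T)ᴴ * colSub A T - 1 with hBig
  have hBigle : ‖Big‖ ≤ δ := hstar ℓ hℓ
  have hδ0 : (0:ℝ) ≤ δ := le_trans (norm_nonneg _) hBigle
  set ι : {j // j ∈ S} → {j // j ∈ T} := fun j => ⟨j.1, Finset.mem_insert_of_mem j.2⟩ with hι
  have hιinj : Function.Injective ι := by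
    intro p q h
    simp only [hι, Subtype.mk.injEq] at h
    exact Subtype.ext h
  set G : Matrix {j // j ∈ S} {j // j ∈ S} ℂ := (colSub A S)ᴴ * colSub A S with hG
  set a : Fin n → ℂ := fun i => A i ℓ with ha
  set b : {j // j ∈ S} → ℂ := (colSub A S)ᴴ *ᵥ a with hb
  set ext : ({j // j ∈ S} → ℂ) → ({j // j ∈ T} → ℂ) :=
    fun v k => if h : k.1 ∈ S then v ⟨k.1, h⟩ else 0 with hext
  have hℓT : ℓ ∈ T := Finset.mem_insert_self ℓ S
  -- key identity: (G - 1) *ᵥ v = (Big *ᵥ ext v) ∘ ι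
  have key : ∀ v : {j // j ∈ S} → ℂ,
      (G - 1) *ᵥ v = fun j => (Big *ᵥ ext v) (ι j) := by
    intro v
    funext j
    set F : Fin N → ℂ := fun x => ((∑ i, (starRingEnd ℂ) (A i j.1) * A i x) -
      if j.1 = x then 1 else 0) * (if h : x ∈ S then v ⟨x, h⟩ else 0) with hF
    have h1 : ((G - 1) *ᵥ v) j = ∑ k : {j // j ∈ S}, F k.1 := by
      show dotProduct _ _ = _
      rw [dotProduct]
      apply Finset.sum_congr rfl
      intro k _
      simp only [hF, hG, Matrix.sub_apply, Matrix.mul_apply, Matrix.conjTranspose_apply,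
        colSub, Matrix.of_apply, Matrix.one_apply, dif_pos k.2]
      congr 2
      · exact if_congr Subtype.ext_iff rfl rfl
    have h2 : (Big *ᵥ ext v) (ι j) = ∑ k : {j // j ∈ T}, F k.1 := by
      show dotProduct _ _ = _
      rw [dotProduct]
      apply Finset.sum_congr rfl
      intro k _
      simp only [hF, hBig, hext, Matrix.sub_apply, Matrix.mul_apply,
        Matrix.conjTranspose_apply, colSub, Matrix.of_apply, Matrix.one_apply]
      congr 2
      · simp [hι, Subtype.ext_iff]
    have h3 : ∑ k : {j // j ∈ T}, F k.1 = ∑ x ∈ T, F x :=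
      (Finset.sum_subtype T (fun _ => Iff.rfl) F).symm
    have h4 : ∑ x ∈ T, F x = ∑ x ∈ S, F x := by
      rw [hT, Finset.sum_insert hℓ]
      have : F ℓ = 0 := by
        simp only [hF, dif_neg hℓ, mul_zero]
      rw [this, zero_add]
    have h5 : ∑ x ∈ S, F x = ∑ k : {j // j ∈ S}, F k.1 :=
      Finset.sum_subtype S (fun _ => Iff.rfl) F
    rw [h1, h2, h3, h4, h5]
  -- norm of extension
  have hextnorm : ∀ v : {j // j ∈ S} → ℂ, ‖esAux (ext v)‖ = ‖esAux v‖ := by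
    intro v
    rw [esAux, esAux, EuclideanSpace.norm_eq, EuclideanSpace.norm_eq]
    congr 1
    simp only [WithLp.equiv_symm_apply, WithLp.ofLp_toLp]
    set H : Fin N → ℝ := fun x => ‖if h : x ∈ S then v ⟨x, h⟩ else 0‖ ^ 2 with hH
    have h1 : ∑ k : {j // j ∈ T}, ‖ext v k‖ ^ 2 = ∑ k : {j // j ∈ T}, H k.1 := rfl
    have h3 : ∑ k : {j // j ∈ T}, H k.1 = ∑ x ∈ T, H x :=
      (Finset.sum_subtype T (fun _ => Iff.rfl) H).symm
    have h4 : ∑ x ∈ T, H x = ∑ x ∈ S, H x := by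
      rw [hT, Finset.sum_insert hℓ]
      have : H ℓ = 0 := by simp [hH, dif_neg hℓ]
      rw [this, zero_add]
    have h5 : ∑ x ∈ S, H x = ∑ k : {j // j ∈ S}, H k.1 :=
      Finset.sum_subtype S (fun _ => Iff.rfl) H
    rw [h1, h3, h4, h5]
    apply Finset.sum_congr rfl
    intro k _
    simp [hH, dif_pos k.2]
  -- bound on (G-1) *ᵥ v
  have hGv : ∀ v : {j // j ∈ S} → ℂ, ‖esAux ((G - 1) *ᵥ v)‖ ≤ δ * ‖esAux v‖ := by
    intro v
    rw [key v]
    calc ‖esAux fun j => (Big *ᵥ ext v) (ι j)‖ ≤ ‖esAux (Big *ᵥ ext v)‖ :=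
          aux_norm_comp_le hιinj _
      _ ≤ ‖Big‖ * ‖esAux (ext v)‖ := aux_mulVec_le Big (ext v)
      _ ≤ δ * ‖esAux v‖ := by
          rw [hextnorm]; exact mul_le_mul_of_nonneg_right hBigle (norm_nonneg _)
  -- bound on b
  have hbeq : b = fun j => (Big *ᵥ Pi.single (⟨ℓ, hℓT⟩ : {j // j ∈ T}) 1) (ι j) := by
    funext j
    rw [Matrix.mulVec_single_one]
    have hne : ι j ≠ ⟨ℓ, hℓT⟩ := by
      intro h
      have h' : (j : Fin N) = ℓ := congrArg Subtype.val h
      exact hℓ (h' ▸ j.2)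
    simp only [hBig, Matrix.sub_apply, Matrix.mul_apply, Matrix.conjTranspose_apply,
      colSub, Matrix.of_apply, Matrix.one_apply, if_neg hne, hb, Matrix.mulVec, Matrix.col_apply,
      dotProduct, ha, mul_one, sub_zero]
    rfl
  have hbnorm : ‖esAux b‖ ≤ δ := by
    rw [hbeq]
    calc ‖esAux fun j => (Big *ᵥ Pi.single (⟨ℓ, hℓT⟩ : {j // j ∈ T}) 1) (ι j)‖
        ≤ ‖esAux (Big *ᵥ Pi.single (⟨ℓ, hℓT⟩ : {j // j ∈ T}) 1)‖ := aux_norm_comp_le hιinj _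
      _ ≤ ‖Big‖ * ‖esAux (Pi.single (⟨ℓ, hℓT⟩ : {j // j ∈ T}) 1)‖ := aux_mulVec_le _ _
      _ ≤ δ * 1 := by
          apply mul_le_mul hBigle (le_of_eq ?_) (norm_nonneg _) hδ0
          exact (EuclideanSpace.norm_single _ (1:ℂ)).trans norm_one
      _ = δ := mul_one δ
  -- invertibility of G
  have hGunit : IsUnit G := by
    rw [← Matrix.mulVec_injective_iff_isUnit]
    intro u v huv
    have h0 : ‖esAux (u - v)‖ ≤ δ * ‖esAux (u - v)‖ := by
      have heq : (G - 1) *ᵥ (u - v) = -(u - v) := by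
        rw [Matrix.sub_mulVec, Matrix.one_mulVec, Matrix.mulVec_sub, huv]
        abel
      have h1 := hGv (u - v)
      rwa [heq, show esAux (-(u - v)) = -esAux (u - v) from rfl, norm_neg] at h1
    have h2 : ‖esAux (u - v)‖ = 0 := by nlinarith [norm_nonneg (esAux (u - v))]
    have huv0 : u - v = 0 := by
      have h3 := norm_eq_zero.mp h2
      have h4 := congrArg (WithLp.equiv 2 _) h3
      simpa [esAux] using h4
    exact sub_eq_zero.mp huv0
  have hGdet : IsUnit G.det := (Matrix.isUnit_iff_isUnit_det G).mp hGunit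
  -- final assembly
  set x : {j // j ∈ S} → ℂ := (pinv A S) *ᵥ a with hx
  have hxb : x = G⁻¹ *ᵥ b := by
    rw [hx, pinv, hb, ← Matrix.mulVec_mulVec]
  have hGx : G *ᵥ x = b := by
    rw [hxb, Matrix.mulVec_mulVec, Matrix.mul_nonsing_inv _ hGdet, Matrix.one_mulVec]
  have hdecomp : x = b - (G - 1) *ᵥ x := by
    rw [Matrix.sub_mulVec, Matrix.one_mulVec, hGx]
    abel
  have hxnorm : ‖esAux x‖ ≤ δ / (1 - δ) := by
    have h2 : ‖esAux x‖ ≤ δ + δ * ‖esAux x‖ := by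
      calc ‖esAux x‖ = ‖esAux b - esAux ((G - 1) *ᵥ x)‖ := by
            rw [show esAux b - esAux ((G - 1) *ᵥ x) = esAux (b - (G - 1) *ᵥ x) from rfl, ← hdecomp]
        _ ≤ ‖esAux b‖ + ‖esAux ((G - 1) *ᵥ x)‖ := norm_sub_le _ _
        _ ≤ δ + δ * ‖esAux x‖ := add_le_add hbnorm (hGv x)
    rw [le_div_iff₀ h1δ]
    nlinarith
  calc Real.sqrt (∑ j : {j // j ∈ S}, ‖x j‖ ^ 2) = ‖esAux x‖ := by
        rw [esAux, EuclideanSpace.norm_eq]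
        congr 1
    _ ≤ δ / (1 - δ) := hxnorm
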